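/- arXiv:1507.04800 — 2 statements merged into one kernel-verified Lean document; each statement's English description precedes it below -/
import Mathlib

section
/- Let G be a connected graph with at least 2 vertices, H any graph, and K an induced subgraph of G[H] whose projection π(K) to G has at least two vertices. Then π(K) is an isometric subgraph of G if and only if K is an isometric subgraph of G[H]. -/
open SimpleGraph

variable {α β : Type*}

/-- The lexicographic product `G[H]`. -/
def lexProd (G : SimpleGraph α) (H : SimpleGraph β) : SimpleGraph (α × β) where
  Adj p q := G.Adj p.1 q.1 ∨ (p.1 = q.1 ∧ H.Adj p.2 q.2)
  symm := by
    constructor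
    rintro ⟨u, x⟩ ⟨v, y⟩ (h | ⟨h1, h2⟩)
    · exact Or.inl h.symm
    · exact Or.inr ⟨h1.symm, h2.symm⟩
  loopless := by
    constructor
    rintro ⟨u, x⟩ (h | ⟨-, h⟩)
    · exact G.loopless.irrefl u h
    · exact H.loopless.irrefl x h

section helpers

variable {V W : Type*}

/-- Map a walk along a map that sends edges to edges-or-equal. -/
lemma walk_map_le {G' : SimpleGraph V} {G : SimpleGraph W} (f : V → W)
    (hf : ∀ ⦃a b⦄, G'.Adj a b → f a = f b ∨ G.Adj (f a) (f b)) :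
    ∀ {p q : V} (w : G'.Walk p q), ∃ w' : G.Walk (f p) (f q), w'.length ≤ w.length := by
  intro p q w
  induction w with
  | nil => exact ⟨.nil, le_rfl⟩
  | cons h w ih =>
    obtain ⟨w', hw'⟩ := ih
    rcases hf h with he | ha
    · exact ⟨w'.copy he.symm rfl, by simpa using hw'.trans (Nat.le_succ _)⟩
    · exact ⟨.cons ha w', by simpa using Nat.add_le_add_right hw' 1⟩

lemma edist_map_le {G' : SimpleGraph V} {G : SimpleGraph W} (f : V → W)
    (hf : ∀ ⦃a b⦄, G'.Adj a b → f a = f b ∨ G.Adj (f a) (f b)) (p q : V) :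
    G.edist (f p) (f q) ≤ G'.edist p q := by
  rcases eq_or_ne (G'.edist p q) ⊤ with h | h
  · simp [h]
  · obtain ⟨w, hw⟩ := exists_walk_of_edist_ne_top h
    obtain ⟨w', hl⟩ := walk_map_le f hf w
    calc G.edist (f p) (f q) ≤ w'.length := edist_le w'
      _ ≤ (w.length : ℕ∞) := by exact_mod_cast hl
      _ = G'.edist p q := hw

lemma exists_adj_of_edist_ne_top {G : SimpleGraph V} {u v : V} (h : G.edist u v ≠ ⊤)
    (hne : u ≠ v) : ∃ w, G.Adj u w := by
  obtain ⟨p, -⟩ := exists_walk_of_edist_ne_top h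
  cases p with
  | nil => exact absurd rfl hne
  | cons h _ => exact ⟨_, h⟩

end helpers

/-- Lift a walk in `G` to a walk in the lexicographic product. -/
lemma lift_walk {G : SimpleGraph α} {H : SimpleGraph β} :
    ∀ {u v : α} (w : G.Walk u v), w.length ≠ 0 → ∀ x y : β,
      ∃ W : (lexProd G H).Walk (u, x) (v, y), W.length = w.length := by
  intro u v w
  induction w with
  | nil => intro h; exact absurd rfl h
  | @cons u c v h w ih =>
    intro _ x y
    by_cases h0 : w.length = 0
    · have hcb : c = v := SimpleGraph.Walk.eq_of_length_eq_zero h0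
      subst hcb
      exact ⟨.cons (Or.inl h) .nil, by show 0 + 1 = w.length + 1; rw [h0]⟩
    · obtain ⟨W, hW⟩ := ih h0 x y
      exact ⟨.cons (Or.inl h) W, by show W.length + 1 = w.length + 1; rw [hW]⟩

/-- Lift a walk in the projection-induced subgraph to the `S`-induced subgraph of the
lexicographic product. -/
lemma lift_walk_induced {G : SimpleGraph α} {H : SimpleGraph β} {S : Set (α × β)} :
    ∀ {a b : ↥(Prod.fst '' S)} (w : (G.induce (Prod.fst '' S)).Walk a b), w.length ≠ 0 →
      ∀ (p q : S), p.1.1 = a.1 → q.1.1 = b.1 →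
      ∃ W : ((lexProd G H).induce S).Walk p q, W.length = w.length := by
  intro a b w
  induction w with
  | nil => intro h; exact absurd rfl h
  | @cons a c b h w ih =>
    intro _ p q hp hq
    have h' : G.Adj a.1 c.1 := h
    by_cases h0 : w.length = 0
    · have hcb : c = b := SimpleGraph.Walk.eq_of_length_eq_zero h0
      subst hcb
      have hadj : ((lexProd G H).induce S).Adj p q := by
        refine Or.inl ?_
        show G.Adj (p : α × β).1 (q : α × β).1
        rw [hp, hq]; exact h'
      exact ⟨.cons hadj .nil, by simp [h0]⟩
    · obtain ⟨z, hz1, hz2⟩ := c.2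
      obtain ⟨W, hW⟩ := ih h0 ⟨z, hz1⟩ q hz2 hq
      have hadj : ((lexProd G H).induce S).Adj p ⟨z, hz1⟩ := by
        refine Or.inl ?_
        show G.Adj (p : α × β).1 z.1
        rw [hp, hz2]; exact h'
      exact ⟨.cons hadj W, by simp [hW]⟩


/-- The induced subgraph on `S` is an isometric subgraph of `G`. -/
def IsometricSet (G : SimpleGraph α) (S : Set α) : Prop :=
  ∀ a b : S, (G.induce S).edist a b = G.edist a.1 b.1

/-- The set of orders of isometric (induced) subgraphs of `G`. -/
def dpSet (G : SimpleGraph α) : Set ℕ :=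
  {k | ∃ S : Finset α, S.card = k ∧ IsometricSet G ↑S}

/-- `G` is distance preserving. -/
def IsDP [Fintype α] (G : SimpleGraph α) : Prop :=
  G.Connected ∧ ∀ i : ℕ, 1 ≤ i → i ≤ Fintype.card α → i ∈ dpSet G

/-- `l` is an sdp sequence for `G`. -/
def IsSdpList [Fintype α] (G : SimpleGraph α) (l : List α) : Prop :=
  l.Nodup ∧ (∀ v : α, v ∈ l) ∧
    ∀ s : ℕ, IsometricSet G {v : α | v ∉ l.take s}

/-- `G` is sequentially distance preserving. -/
def IsSDP [Fintype α] (G : SimpleGraph α) : Prop :=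
  G.Connected ∧ ∃ l : List α, IsSdpList G l

theorem stmt_2 (G : SimpleGraph α) (H : SimpleGraph β)
    (hG : G.Connected) [Fintype α] (hcard : 2 ≤ Fintype.card α)
    (S : Set (α × β)) (hproj : (Prod.fst '' S).Nontrivial) :
    IsometricSet G (Prod.fst '' S) ↔ IsometricSet (lexProd G H) S := by
  set T := Prod.fst '' S with hT
  constructor
  · intro hπ p q
    refine le_antisymm ?_ (edist_map_le Subtype.val (fun a b hab => Or.inr hab) p q)
    by_cases huv : (p : α × β).1 = (q : α × β).1
    · by_cases hpq : (p : α × β) = (q : α × β)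
      · have hpq' : p = q := Subtype.ext hpq
        subst hpq'
        simp [edist_self]
      · by_cases hH : H.Adj (p : α × β).2 (q : α × β).2
        · have hadj : (lexProd G H).Adj p.1 q.1 := Or.inr ⟨huv, hH⟩
          rw [edist_eq_one_iff_adj.mpr hadj]
          have hW : ((lexProd G H).induce S).Adj p q := hadj
          have := edist_le (SimpleGraph.Walk.cons hW .nil)
          simpa using this
        · -- distance 2 case
          have hnadj : ¬ (lexProd G H).Adj p.1 q.1 := by
            rintro (g | ⟨-, g⟩)
            · rw [huv] at g; exact G.loopless.irrefl _ g
            · exact hH g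
          -- lower bound : 2 ≤ D
          have h1 : (1 : ℕ∞) < (lexProd G H).edist p.1 q.1 := by
            refine lt_of_le_of_ne (Order.one_le_iff_pos.mpr (edist_pos_of_ne hpq)) ?_
            intro h
            exact hnadj (edist_eq_one_iff_adj.mp h.symm)
          have h2 : (2 : ℕ∞) ≤ (lexProd G H).edist p.1 q.1 := by
            have := Order.add_one_le_of_lt h1
            simpa [one_add_one_eq_two] using this
          -- upper bound : C ≤ 2
          have hu : (p : α × β).1 ∈ T := ⟨p.1, p.2, rfl⟩
          obtain ⟨u', hu', hne'⟩ := hproj.exists_ne (p : α × β).1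
          have hBne : G.edist (p : α × β).1 u' ≠ ⊤ :=
            edist_ne_top_iff_reachable.mpr (hG.preconnected _ _)
          have hAne : (G.induce T).edist ⟨(p : α × β).1, hu⟩ ⟨u', hu'⟩ ≠ ⊤ := by
            rw [hπ ⟨(p : α × β).1, hu⟩ ⟨u', hu'⟩]; exact hBne
          obtain ⟨c, hc⟩ := exists_adj_of_edist_ne_top hAne
            (by simp [Subtype.ext_iff]; exact fun h => hne' h.symm)
          have hc' : G.Adj (p : α × β).1 c.1 := hc
          obtain ⟨z, hz1, hz2⟩ := c.2
          have e1 : ((lexProd G H).induce S).Adj p ⟨z, hz1⟩ := by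
            refine Or.inl ?_
            show G.Adj (p : α × β).1 z.1
            rw [hz2]; exact hc'
          have e2 : ((lexProd G H).induce S).Adj ⟨z, hz1⟩ q := by
            refine Or.inl ?_
            show G.Adj z.1 (q : α × β).1
            rw [hz2, ← huv]; exact hc'.symm
          have hCle := edist_le (SimpleGraph.Walk.cons e1 (SimpleGraph.Walk.cons e2 .nil))
          refine le_trans ?_ h2
          simpa using hCle
    · -- first coordinates differ
      have hu : (p : α × β).1 ∈ T := ⟨p.1, p.2, rfl⟩
      have hv : (q : α × β).1 ∈ T := ⟨q.1, q.2, rfl⟩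
      have hA : (G.induce T).edist ⟨(p : α × β).1, hu⟩ ⟨(q : α × β).1, hv⟩
          = G.edist (p : α × β).1 (q : α × β).1 := hπ _ _
      have hB : G.edist (p : α × β).1 (q : α × β).1 ≤ (lexProd G H).edist p.1 q.1 :=
        edist_map_le Prod.fst
          (fun a b hab => by
            rcases hab with g | ⟨e, -⟩
            · exact Or.inr g
            · exact Or.inl e) p.1 q.1
      rcases eq_or_ne (G.edist (p : α × β).1 (q : α × β).1) ⊤ with htop | htop
      · have : (lexProd G H).edist p.1 q.1 = ⊤ := top_le_iff.mp (htop ▸ hB)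
        rw [this]; exact le_top
      · have hAne : (G.induce T).edist ⟨(p : α × β).1, hu⟩ ⟨(q : α × β).1, hv⟩ ≠ ⊤ := by
          rw [hA]; exact htop
        obtain ⟨w, hw⟩ := exists_walk_of_edist_ne_top hAne
        have hwne : w.length ≠ 0 := by
          intro h0
          have := SimpleGraph.Walk.eq_of_length_eq_zero h0
          rw [Subtype.ext_iff] at this
          exact huv this
        obtain ⟨W, hWl⟩ := lift_walk_induced w hwne p q rfl rfl
        calc ((lexProd G H).induce S).edist p q ≤ W.length := edist_le W
          _ = (w.length : ℕ∞) := by exact_mod_cast hWl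
          _ = _ := hw
          _ = _ := hA
          _ ≤ _ := hB
  · intro hS a b
    refine le_antisymm ?_ (edist_map_le Subtype.val (fun x y hxy => Or.inr hxy) a b)
    obtain ⟨⟨pa, px⟩, hpS, hp2⟩ := a.2
    obtain ⟨⟨qa, qx⟩, hqS, hq2⟩ := b.2
    dsimp at hp2 hq2
    subst hp2; subst hq2
    by_cases hab : a = b
    · subst hab; simp [SimpleGraph.edist_self]
    · have hne : (a : α) ≠ (b : α) := fun h => hab (Subtype.ext h)
      have hAC : (G.induce T).edist a b
          ≤ ((lexProd G H).induce S).edist ⟨((a : α), px), hpS⟩ ⟨((b : α), qx), hqS⟩ := by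
        have := edist_map_le
          (G := G.induce T)
          (f := fun z : S => (⟨(z : α × β).1, ⟨z.1, z.2, rfl⟩⟩ : T))
          (fun x y (hxy : ((lexProd G H).induce S).Adj x y) => by
            rcases hxy with g | ⟨e, -⟩
            · exact Or.inr g
            · exact Or.inl (Subtype.ext e))
          ⟨((a : α), px), hpS⟩ ⟨((b : α), qx), hqS⟩
        have ea : (⟨(((a : α), px) : α × β).1, _⟩ : T) = a := Subtype.ext rfl
        have eb : (⟨(((b : α), qx) : α × β).1, _⟩ : T) = b := Subtype.ext rfl
        rwa [ea, eb] at this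
      have hCD := hS ⟨((a : α), px), hpS⟩ ⟨((b : α), qx), hqS⟩
      have hDB : (lexProd G H).edist ((a : α), px) ((b : α), qx) ≤ G.edist a.1 b.1 := by
        rcases eq_or_ne (G.edist (a : α) (b : α)) ⊤ with htop | htop
        · rw [htop]; exact le_top
        · obtain ⟨w, hw⟩ := exists_walk_of_edist_ne_top htop
          have hwne : w.length ≠ 0 := fun h0 =>
            hne (SimpleGraph.Walk.eq_of_length_eq_zero h0)
          obtain ⟨W, hWl⟩ := lift_walk w hwne px qx
          calc (lexProd G H).edist ((a : α), px) ((b : α), qx) ≤ W.length := edist_le W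
            _ = (w.length : ℕ∞) := by exact_mod_cast hWl
            _ = _ := hw
      exact hAC.trans (hCD.trans_le hDB)
end

section
/- Let G be a connected graph with at least 2 vertices, H a graph with n vertices. Then G[H] is distance preserving if and only if for every pair a, b ∈ dp(G) bounding a non-dp interval one has b ≤ an + 1, where dp(G) is the set of orders of isometric subgraphs of G. -/
open SimpleGraph

variable {α β : Type*}

section Aux
variable {G : SimpleGraph α} {H : SimpleGraph β}

/-- ambient edist ≤ induced edist -/
lemma edist_le_induce {S : Set α} (a b : S) : G.edist a.1 b.1 ≤ (G.induce S).edist a b := by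
  rcases eq_or_ne ((G.induce S).edist a b) ⊤ with h | h
  · simp [h]
  · obtain ⟨p, hp⟩ := exists_walk_of_edist_ne_top h
    rw [← hp]
    have key := (p.map (Embedding.induce S).toHom).edist_le
    rw [Walk.length_map] at key
    exact key

lemma lex_adj {p q : α × β} (h : (lexProd G H).Adj p q) :
    G.Adj p.1 q.1 ∨ (p.1 = q.1 ∧ H.Adj p.2 q.2) := h

/-- projection of walks in induced lex product -/
lemma proj_walk_edist {S : Set (α × β)} {B : Set α} (hB : ∀ z ∈ S, Prod.fst z ∈ B)
    {p q : S} (w : ((lexProd G H).induce S).Walk p q) :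
    (G.induce B).edist ⟨p.1.1, hB _ p.2⟩ ⟨q.1.1, hB _ q.2⟩ ≤ w.length := by
  induction w with
  | nil => simpa using Walk.edist_le (.nil : (G.induce B).Walk _ _)
  | @cons p r q h w ih =>
      rcases lex_adj h with hg | ⟨he, -⟩
      · have hadj : (G.induce B).Adj ⟨p.1.1, hB _ p.2⟩ ⟨r.1.1, hB _ r.2⟩ := hg
        calc (G.induce B).edist ⟨p.1.1, hB _ p.2⟩ ⟨q.1.1, hB _ q.2⟩
            ≤ (G.induce B).edist ⟨p.1.1, hB _ p.2⟩ ⟨r.1.1, hB _ r.2⟩ +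
              (G.induce B).edist ⟨r.1.1, hB _ r.2⟩ ⟨q.1.1, hB _ q.2⟩ := SimpleGraph.edist_triangle
          _ ≤ 1 + w.length :=
              add_le_add (by simpa using hadj.toWalk.edist_le) ih
          _ = ((w.length + 1 : ℕ) : ℕ∞) := by push_cast; ring
          _ = _ := by simp
      · have hpr : (⟨p.1.1, hB _ p.2⟩ : B) = ⟨r.1.1, hB _ r.2⟩ := Subtype.ext he
        rw [hpr]
        refine ih.trans ?_
        simp only [Walk.length_cons]
        exact_mod_cast Nat.le_succ _

lemma exists_adj_of_walk {γ : Type*} {G' : SimpleGraph γ} {u v : γ} (h : u ≠ v) (w : G'.Walk u v) :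
    ∃ r, G'.Adj u r := by
  cases w with
  | nil => exact absurd rfl h
  | cons h _ => exact ⟨_, h⟩

lemma exists_adj [Fintype α] (hG : G.Connected) (hcard : 2 ≤ Fintype.card α) (u : α) :
    ∃ w, G.Adj u w := by
  obtain ⟨v, hv⟩ := Fintype.exists_ne_of_one_lt_card hcard u
  exact exists_adj_of_walk (Ne.symm hv) (hG u v).some

/-- lifting walks in an induced subgraph of `G` to the induced lex product -/
lemma lift_walk_edist {S : Set (α × β)} {B : Set α}
    (hsec : ∀ b : B, ∃ y, (b.1, y) ∈ S) {b c : B} (w : (G.induce B).Walk b c) :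
    ∀ (_ : b ≠ c) (x y : β) (hx : (b.1, x) ∈ S) (hy : (c.1, y) ∈ S),
      ((lexProd G H).induce S).edist ⟨(b.1, x), hx⟩ ⟨(c.1, y), hy⟩ ≤ w.length := by
  induction w with
  | nil => exact fun h => absurd rfl h
  | @cons b r c h w ih =>
      intro hbc x y hx hy
      rcases eq_or_ne r c with hrc | hrc
      · subst hrc
        have hadj : ((lexProd G H).induce S).Adj ⟨(b.1, x), hx⟩ ⟨(r.1, y), hy⟩ :=
          Or.inl h
        have h1 : ((lexProd G H).induce S).edist ⟨(b.1, x), hx⟩ ⟨(r.1, y), hy⟩ ≤ 1 := by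
          simpa using hadj.toWalk.edist_le
        refine h1.trans ?_
        simp only [Walk.length_cons]
        exact_mod_cast Nat.succ_le_succ (Nat.zero_le _)
      · obtain ⟨y', hy'⟩ := hsec r
        have hadj : ((lexProd G H).induce S).Adj ⟨(b.1, x), hx⟩ ⟨(r.1, y'), hy'⟩ :=
          Or.inl h
        calc ((lexProd G H).induce S).edist ⟨(b.1, x), hx⟩ ⟨(c.1, y), hy⟩
            ≤ ((lexProd G H).induce S).edist ⟨(b.1, x), hx⟩ ⟨(r.1, y'), hy'⟩ +
              ((lexProd G H).induce S).edist ⟨(r.1, y'), hy'⟩ ⟨(c.1, y), hy⟩ :=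
              SimpleGraph.edist_triangle
          _ ≤ 1 + w.length :=
              add_le_add (by simpa using hadj.toWalk.edist_le) (ih hrc y' y hy' hy)
          _ = ((w.length + 1 : ℕ) : ℕ∞) := by push_cast; ring
          _ = _ := by simp

lemma lex_proj_walk_edist {p q : α × β} (w : (lexProd G H).Walk p q) :
    G.edist p.1 q.1 ≤ w.length := by
  induction w with
  | nil => simp
  | @cons p r q h w ih =>
      rcases lex_adj h with hg | ⟨he, -⟩
      · calc G.edist p.1 q.1 ≤ G.edist p.1 r.1 + G.edist r.1 q.1 := SimpleGraph.edist_triangle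
          _ ≤ 1 + w.length := add_le_add (by simpa using hg.toWalk.edist_le) ih
          _ = ((w.length + 1 : ℕ) : ℕ∞) := by push_cast; ring
          _ = _ := by simp
      · rw [he]
        refine ih.trans ?_
        simp only [Walk.length_cons]
        exact_mod_cast Nat.le_succ _

lemma lex_lift_walk_edist {u v : α} (w : G.Walk u v) (y0 : β) :
    ∀ (_ : u ≠ v) (x y : β), (lexProd G H).edist (u, x) (v, y) ≤ w.length := by
  induction w with
  | nil => exact fun h => absurd rfl h
  | @cons u r v h w ih =>
      intro huv x y
      rcases eq_or_ne r v with hrv | hrv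
      · subst hrv
        have hadj : (lexProd G H).Adj (u, x) (r, y) := Or.inl h
        have h1 : (lexProd G H).edist (u, x) (r, y) ≤ 1 := by simpa using hadj.toWalk.edist_le
        refine h1.trans ?_
        simp only [Walk.length_cons]
        exact_mod_cast Nat.succ_le_succ (Nat.zero_le _)
      · have hadj : (lexProd G H).Adj (u, x) (r, y0) := Or.inl h
        calc (lexProd G H).edist (u, x) (v, y)
            ≤ (lexProd G H).edist (u, x) (r, y0) + (lexProd G H).edist (r, y0) (v, y) :=
              SimpleGraph.edist_triangle
          _ ≤ 1 + w.length := add_le_add (by simpa using hadj.toWalk.edist_le) (ih hrv y0 y)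
          _ = ((w.length + 1 : ℕ) : ℕ∞) := by push_cast; ring
          _ = _ := by simp

lemma lex_edist_ne (hG : G.Connected) [Nonempty β] {u v : α} (h : u ≠ v) (x y : β) :
    (lexProd G H).edist (u, x) (v, y) = G.edist u v := by
  refine le_antisymm ?_ ?_
  · obtain ⟨w, hw⟩ := (hG u v).exists_walk_length_eq_edist
    exact hw ▸ lex_lift_walk_edist w (Classical.arbitrary β) h x y
  · rcases eq_or_ne ((lexProd G H).edist (u, x) (v, y)) ⊤ with ht | ht
    · simp [ht]
    · obtain ⟨w, hw⟩ := exists_walk_of_edist_ne_top ht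
      exact hw ▸ lex_proj_walk_edist w

lemma lex_edist_adj {u : α} {x y : β} (h : H.Adj x y) :
    (lexProd G H).edist (u, x) (u, y) = 1 :=
  edist_eq_one_iff_adj.mpr (Or.inr ⟨rfl, h⟩)

lemma two_le_of_ne_of_not_adj {γ : Type*} {G' : SimpleGraph γ} {u v : γ} (hne : u ≠ v)
    (hadj : ¬G'.Adj u v) : 2 ≤ G'.edist u v := by
  rcases eq_or_ne (G'.edist u v) ⊤ with ht | ht
  · simp [ht]
  · lift G'.edist u v to ℕ using ht with n hn
    have h0 : n ≠ 0 := by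
      rintro rfl
      exact hne (edist_eq_zero_iff.mp (by exact_mod_cast hn.symm))
    have h1 : n ≠ 1 := by
      rintro rfl
      exact hadj (edist_eq_one_iff_adj.mp (by exact_mod_cast hn.symm))
    exact_mod_cast Nat.two_le_iff n |>.mpr ⟨h0, h1⟩

lemma lex_edist_same [Fintype α] (hG : G.Connected) (hcard : 2 ≤ Fintype.card α)
    {u : α} {x y : β} (hxy : x ≠ y) (hadj : ¬H.Adj x y) :
    (lexProd G H).edist (u, x) (u, y) = 2 := by
  obtain ⟨w, hw⟩ := exists_adj hG hcard u
  have hne : ((u, x) : α × β) ≠ (u, y) := fun h => hxy (congrArg Prod.snd h)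
  have hnadj : ¬(lexProd G H).Adj (u, x) (u, y) := by
    rintro (h | ⟨-, h⟩)
    · exact G.loopless.irrefl u h
    · exact hadj h
  refine le_antisymm ?_ (two_le_of_ne_of_not_adj hne hnadj)
  have s1 : (lexProd G H).Adj (u, x) (w, x) := Or.inl hw
  have s2 : (lexProd G H).Adj (w, x) (u, y) := Or.inl hw.symm
  simpa using (Walk.cons s1 (Walk.cons s2 Walk.nil)).edist_le

/-- projection of an isometric set in the lex product is isometric -/
lemma isometric_proj [Fintype α] [Nonempty β] (hG : G.Connected)
    {S : Set (α × β)} (hS : IsometricSet (lexProd G H) S) :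
    IsometricSet G (Prod.fst '' S) := by
  intro a b
  rcases eq_or_ne a b with rfl | hne
  · simp [edist_self]
  · obtain ⟨za, hzaS, hza⟩ := a.2
    obtain ⟨zb, hzbS, hzb⟩ := b.2
    have hne' : a.1 ≠ b.1 := Subtype.coe_ne_coe.mpr hne
    refine le_antisymm ?_ (edist_le_induce a b)
    have hproj : ∀ z ∈ S, Prod.fst z ∈ Prod.fst '' S := fun z hz => ⟨z, hz, rfl⟩
    have hznefst : za.1 ≠ zb.1 := by rw [hza, hzb]; exact hne'
    rcases eq_or_ne (((lexProd G H).induce S).edist ⟨za, hzaS⟩ ⟨zb, hzbS⟩) ⊤ with ht | ht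
    · exfalso
      rw [hS ⟨za, hzaS⟩ ⟨zb, hzbS⟩] at ht
      have : (lexProd G H).edist (za.1, za.2) (zb.1, zb.2) = G.edist za.1 zb.1 :=
        lex_edist_ne hG hznefst za.2 zb.2
      rw [this] at ht
      exact (edist_ne_top_iff_reachable.mpr (hG za.1 zb.1)) ht
    · obtain ⟨w, hw⟩ := exists_walk_of_edist_ne_top ht
      have key := proj_walk_edist hproj w
      have ha' : (⟨za.1, hproj _ hzaS⟩ : ↥(Prod.fst '' S)) = a := Subtype.ext hza
      have hb' : (⟨zb.1, hproj _ hzbS⟩ : ↥(Prod.fst '' S)) = b := Subtype.ext hzb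
      rw [ha', hb', hw] at key
      refine key.trans ?_
      rw [hS ⟨za, hzaS⟩ ⟨zb, hzbS⟩]
      have : (lexProd G H).edist (za.1, za.2) (zb.1, zb.2) = G.edist za.1 zb.1 :=
        lex_edist_ne hG hznefst za.2 zb.2
      rw [this, hza, hzb]

/-- a set with isometric projection and nonempty fibers is isometric in the lex product -/
lemma isometric_lift [Fintype α] [Nonempty β] (hG : G.Connected) (hcard : 2 ≤ Fintype.card α)
    {B : Set α} (hB : IsometricSet G B) (u0 u1 : B) (hu01 : u0 ≠ u1)
    {S : Set (α × β)} (hproj : ∀ z ∈ S, Prod.fst z ∈ B)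
    (hsec : ∀ b : B, ∃ y, (b.1, y) ∈ S) :
    IsometricSet (lexProd G H) S := by
  intro p q
  rcases eq_or_ne p.1.1 q.1.1 with hefst | hefst
  · -- same fiber
    rcases eq_or_ne p q with rfl | hne
    · simp [edist_self]
    · have hsnd : p.1.2 ≠ q.1.2 := fun h => hne (Subtype.ext (Prod.ext hefst h))
      by_cases hadj : H.Adj p.1.2 q.1.2
      · have h1 : ((lexProd G H).induce S).Adj p q := Or.inr ⟨hefst, hadj⟩
        have h2 : (lexProd G H).Adj p.1 q.1 := Or.inr ⟨hefst, hadj⟩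
        rw [edist_eq_one_iff_adj.mpr h1, edist_eq_one_iff_adj.mpr h2]
      · -- distance 2 on both sides
        have hamb : (lexProd G H).edist p.1 q.1 = 2 := by
          have := lex_edist_same (H := H) hG hcard hsnd hadj (u := p.1.1)
          rw [show ((p.1.1, p.1.2) : α × β) = p.1 from rfl] at this
          rw [show ((p.1.1, q.1.2) : α × β) = q.1 from Prod.ext hefst rfl] at this
          exact this
        rw [hamb]
        refine le_antisymm ?_ ?_
        · -- find neighbor of p.1.1 in B with a section point
          have hpB : p.1.1 ∈ B := hproj _ p.2
          have hu : (⟨p.1.1, hpB⟩ : B) ≠ u0 ∨ (⟨p.1.1, hpB⟩ : B) ≠ u1 := by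
            rcases eq_or_ne (⟨p.1.1, hpB⟩ : B) u0 with h | h
            · exact Or.inr (h ▸ hu01)
            · exact Or.inl h
          obtain ⟨v, hv⟩ : ∃ v : B, (⟨p.1.1, hpB⟩ : B) ≠ v := by
            rcases hu with h | h
            · exact ⟨u0, h⟩
            · exact ⟨u1, h⟩
          have hreach : (G.induce B).edist ⟨p.1.1, hpB⟩ v ≠ ⊤ := by
            rw [hB ⟨p.1.1, hpB⟩ v]
            exact edist_ne_top_iff_reachable.mpr (hG _ _)
          obtain ⟨w, hw⟩ := exists_walk_of_edist_ne_top hreach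
          obtain ⟨r, hr⟩ := exists_adj_of_walk hv w
          obtain ⟨y', hy'⟩ := hsec r
          have s1 : ((lexProd G H).induce S).Adj p ⟨(r.1, y'), hy'⟩ := Or.inl hr
          have s2 : ((lexProd G H).induce S).Adj ⟨(r.1, y'), hy'⟩ q := by
            refine Or.inl ?_
            show G.Adj r.1 q.1.1
            rw [← hefst]
            exact hr.symm
          simpa using (Walk.cons s1 (Walk.cons s2 Walk.nil)).edist_le
        · refine two_le_of_ne_of_not_adj hne ?_
          rintro (h | ⟨-, h⟩)
          · have h' : G.Adj p.1.1 q.1.1 := h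
            rw [hefst] at h'
            exact G.loopless.irrefl _ h'
          · exact hadj h
  · -- different fibers
    have hamb : (lexProd G H).edist p.1 q.1 = G.edist p.1.1 q.1.1 := by
      have := lex_edist_ne (H := H) hG hefst p.1.2 q.1.2
      simpa using this
    rw [hamb]
    refine le_antisymm ?_ ?_
    · have hpB : p.1.1 ∈ B := hproj _ p.2
      have hqB : q.1.1 ∈ B := hproj _ q.2
      have hBe : (G.induce B).edist ⟨p.1.1, hpB⟩ ⟨q.1.1, hqB⟩ = G.edist p.1.1 q.1.1 :=
        hB ⟨p.1.1, hpB⟩ ⟨q.1.1, hqB⟩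
      have hnt : (G.induce B).edist ⟨p.1.1, hpB⟩ ⟨q.1.1, hqB⟩ ≠ ⊤ := by
        rw [hBe]
        exact edist_ne_top_iff_reachable.mpr (hG _ _)
      obtain ⟨w, hw⟩ := exists_walk_of_edist_ne_top hnt
      have hne' : (⟨p.1.1, hpB⟩ : B) ≠ ⟨q.1.1, hqB⟩ := fun h => hefst (congrArg Subtype.val h)
      have key := lift_walk_edist (H := H) hsec w hne' p.1.2 q.1.2 p.2 q.2
      rw [hw, hBe] at key
      exact key
    · exact hamb ▸ edist_le_induce p q

lemma isometricSet_singleton (v : α) : IsometricSet G {v} := by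
  rintro ⟨a, ha⟩ ⟨b, hb⟩
  simp only [Set.mem_singleton_iff] at ha hb
  subst ha; subst hb
  simp [edist_self]

lemma isometricSet_pair {u v : α} (h : G.Adj u v) : IsometricSet G {u, v} := by
  rintro ⟨a, ha⟩ ⟨b, hb⟩
  rcases eq_or_ne a b with rfl | hne
  · simp [edist_self]
  · simp only [Set.mem_insert_iff, Set.mem_singleton_iff] at ha hb
    have hadj : G.Adj a b := by
      rcases ha with rfl | rfl <;> rcases hb with rfl | rfl
      · exact absurd rfl hne
      · exact h
      · exact h.symm
      · exact absurd rfl hne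
    have h1 : (G.induce {u, v}).Adj ⟨a, by simpa using ha⟩ ⟨b, by simpa using hb⟩ := hadj
    rw [edist_eq_one_iff_adj.mpr h1, edist_eq_one_iff_adj.mpr hadj]

lemma isometricSet_univ : IsometricSet G Set.univ := by
  intro a b
  refine le_antisymm ?_ (edist_le_induce a b)
  rcases eq_or_ne (G.edist a.1 b.1) ⊤ with ht | ht
  · simp [ht]
  · obtain ⟨p, hp⟩ := exists_walk_of_edist_ne_top ht
    rw [← hp]
    have key := (p.map (⟨fun v => ⟨v, trivial⟩, fun h => h⟩ : G →g G.induce Set.univ)).edist_le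
    rw [Walk.length_map] at key
    exact key

lemma one_mem_dpSet [Nonempty α] : 1 ∈ dpSet G :=
  ⟨{Classical.arbitrary α}, by simp, by
    rw [Finset.coe_singleton]; exact isometricSet_singleton _⟩

lemma two_mem_dpSet [Fintype α] (hG : G.Connected) (hcard : 2 ≤ Fintype.card α) :
    2 ∈ dpSet G := by
  classical
  have : Nonempty α := Fintype.card_pos_iff.mp (by omega)
  obtain ⟨w, hw⟩ := exists_adj hG hcard (Classical.arbitrary α)
  refine ⟨{Classical.arbitrary α, w}, ?_, ?_⟩
  · rw [Finset.card_insert_of_notMem (by simp [hw.ne]), Finset.card_singleton]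
  · rw [Finset.coe_insert, Finset.coe_singleton]
    exact isometricSet_pair hw

lemma card_mem_dpSet [Fintype α] : Fintype.card α ∈ dpSet G :=
  ⟨Finset.univ, Finset.card_univ, by rw [Finset.coe_univ]; exact isometricSet_univ⟩

lemma le_card_of_mem_dpSet [Fintype α] {k : ℕ} (h : k ∈ dpSet G) : k ≤ Fintype.card α := by
  obtain ⟨S, hc, -⟩ := h
  exact hc ▸ S.card_le_univ.trans_eq Finset.card_univ

lemma lexProd_connected [Fintype α] [Nonempty β] (hG : G.Connected)
    (hcard : 2 ≤ Fintype.card α) : (lexProd G H).Connected := by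
  have : Nonempty α := Fintype.card_pos_iff.mp (by omega)
  rw [connected_iff]
  refine ⟨?_, inferInstance⟩
  rintro ⟨u, x⟩ ⟨v, y⟩
  rcases eq_or_ne u v with rfl | huv
  · rcases eq_or_ne x y with rfl | hxy
    · exact Reachable.refl _
    · obtain ⟨w, hw⟩ := exists_adj hG hcard u
      have s1 : (lexProd G H).Adj (u, x) (w, x) := Or.inl hw
      have s2 : (lexProd G H).Adj (w, x) (u, y) := Or.inl hw.symm
      exact ⟨Walk.cons s1 (Walk.cons s2 Walk.nil)⟩
  · refine reachable_of_edist_ne_top ?_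
    rw [lex_edist_ne hG huv x y]
    exact edist_ne_top_iff_reachable.mpr (hG u v)

end Aux
theorem stmt_3 (G : SimpleGraph α) (H : SimpleGraph β)
    (hG : G.Connected) [Fintype α] (hcard : 2 ≤ Fintype.card α)
    [Fintype β] [Nonempty β] :
    IsDP (lexProd G H) ↔
      ∀ a b : ℕ, a ∈ dpSet G → b ∈ dpSet G →
        (∃ c : ℕ, a < c ∧ c < b) →
        (∀ c : ℕ, a < c → c < b → c ∉ dpSet G) →
        b ≤ a * Fintype.card β + 1 := by
  classical
  have hNea : Nonempty α := Fintype.card_pos_iff.mp (by omega)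
  set n := Fintype.card β with hn
  set N := Fintype.card α with hN
  have hn1 : 1 ≤ n := Fintype.card_pos
  constructor
  · rintro ⟨-, hDP⟩ a b ha hb ⟨c0, hc0a, hc0b⟩ hgap
    by_contra hcon
    push_neg at hcon
    have ha1 : 1 ≤ a := by
      by_contra h
      push_neg at h
      interval_cases a
      exact hgap 1 (by omega) (by omega) one_mem_dpSet
    have hbN : b ≤ N := le_card_of_mem_dpSet hb
    have hab2 : a + 2 ≤ b := by omega
    have hsN : a * n + 1 ≤ Fintype.card (α × β) := by
      rw [Fintype.card_prod, ← hn, ← hN]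
      nlinarith
    obtain ⟨S, hScard, hSiso⟩ := hDP (a * n + 1) (by omega) hsN
    set B := S.image Prod.fst with hB
    have hBiso : IsometricSet G ↑B := by
      rw [hB, Finset.coe_image]
      exact isometric_proj hG hSiso
    have hBmem : B.card ∈ dpSet G := ⟨B, rfl, hBiso⟩
    have hc1 : B.card ≤ a * n + 1 := hScard ▸ Finset.card_image_le
    have hc2 : a * n + 1 ≤ B.card * n := by
      rw [← hScard]
      calc S.card ≤ (B ×ˢ Finset.univ).card :=
            Finset.card_le_card (fun z hz => Finset.mem_product.mpr
              ⟨Finset.mem_image_of_mem _ hz, Finset.mem_univ _⟩)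
        _ = B.card * n := by rw [Finset.card_product, Finset.card_univ]
    have haB : a < B.card := by nlinarith
    exact hgap B.card haB (by omega) hBmem
  · intro hcond
    refine ⟨lexProd_connected hG hcard, ?_⟩
    intro i hi1 hiN
    rw [Fintype.card_prod, ← hn, ← hN] at hiN
    rcases eq_or_lt_of_le hi1 with h1 | hi2
    · exact ⟨{(Classical.arbitrary α, Classical.arbitrary β)}, by rw [Finset.card_singleton]; omega, by
        rw [Finset.coe_singleton]; exact isometricSet_singleton _⟩
    · -- 2 ≤ i
      have hex : ∃ c, c ∈ dpSet G ∧ 2 ≤ c ∧ i ≤ c * n :=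
        ⟨N, card_mem_dpSet, hcard, by nlinarith⟩
      set b := Nat.find hex with hbdef
      obtain ⟨hbdp, hb2, hbn⟩ := Nat.find_spec hex
      have hbi : b ≤ i := by
        by_contra hbig
        push_neg at hbig
        set a := Nat.findGreatest (· ∈ dpSet G) (b - 1) with hadef
        have h2dp : 2 ∈ dpSet G := two_mem_dpSet hG hcard
        have hb3 : 3 ≤ b := by omega
        have ha2 : 2 ≤ a := Nat.le_findGreatest (by omega) h2dp
        have hadp : a ∈ dpSet G := Nat.findGreatest_spec (P := (· ∈ dpSet G)) (by omega) h2dp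
        have hab : a ≤ b - 1 := Nat.findGreatest_le _
        have hmax : ∀ c, a < c → c < b → c ∉ dpSet G := fun c h1 h2 =>
          Nat.findGreatest_is_greatest h1 (by omega)
        have hamin : ¬(a ∈ dpSet G ∧ 2 ≤ a ∧ i ≤ a * n) :=
          Nat.find_min hex (by omega)
        have han : a * n < i := by
          by_contra h
          push_neg at h
          exact hamin ⟨hadp, ha2, h⟩
        rcases eq_or_lt_of_le (show a + 1 ≤ b by omega) with heq | hlt
        · -- a + 1 = b, so a ≥ i, contradiction with a*n < i
          have : i ≤ a := by omega
          nlinarith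
        · have := hcond a b hadp hbdp ⟨a + 1, by omega, by omega⟩ hmax
          omega
      -- construct the isometric set of size i
      obtain ⟨Bf, hBcard, hBiso⟩ := hbdp
      set x0 := Classical.arbitrary β with hx0
      have hinj : Function.Injective (fun u : α => (u, x0)) := fun u v h =>
        congrArg Prod.fst h
      set S0 := Bf.image (fun u => (u, x0)) with hS0
      have hS0card : S0.card = b := by rw [hS0, Finset.card_image_of_injective _ hinj, hBcard]
      have hsub : S0 ⊆ Bf ×ˢ Finset.univ := by
        intro z hz
        rw [hS0, Finset.mem_image] at hz
        obtain ⟨u, hu, rfl⟩ := hz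
        exact Finset.mem_product.mpr ⟨hu, Finset.mem_univ _⟩
      have htot : (Bf ×ˢ (Finset.univ : Finset β)).card = b * n := by
        rw [Finset.card_product, Finset.card_univ, hBcard]
      obtain ⟨S, hS0S, hSsub, hScard⟩ :=
        Finset.exists_subsuperset_card_eq hsub (le_trans (le_of_eq hS0card) hbi)
          (le_trans hbn (le_of_eq htot.symm))
      refine ⟨S, hScard, ?_⟩
      have h2Bf : 1 < Bf.card := by omega
      obtain ⟨u0, hu0, u1, hu1, hu01⟩ := Finset.one_lt_card.mp h2Bf
      refine isometric_lift hG hcard hBiso ⟨u0, hu0⟩ ⟨u1, hu1⟩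
        (fun h => hu01 (congrArg Subtype.val h)) ?_ ?_
      · intro z hz
        have := hSsub hz
        exact (Finset.mem_product.mp this).1
      · intro bb
        exact ⟨x0, hS0S (Finset.mem_image_of_mem _ (by exact bb.2))⟩
end
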